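/- Hardy–Littlewood submajorization is respected by decreasing rearrangement sums: for f, g measurable on a σ-finite measure space, ∫₀^α μ_t(f+g) dt ≤ ∫₀^α μ_t(f) dt + ∫₀^α μ_t(g) dt for every α > 0. -/

import Mathlib

open MeasureTheory Set
open scoped ENNReal

/-- The decreasing rearrangement of `h`: `μ_t(h) = inf{s ≥ 0 : μ({|h| > s}) ≤ t}`. -/
noncomputable def rearr {X : Type*} [MeasurableSpace X] (μ : Measure X) (h : X → ℝ)
    (t : ℝ) : ℝ≥0∞ :=
  sInf {s : ℝ≥0∞ | μ {x | s < ENNReal.ofReal |h x|} ≤ ENNReal.ofReal t}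

section Aux

variable {X : Type*} [MeasurableSpace X] (μ : Measure X) (h : X → ℝ)

lemma rearr_anti : Antitone (rearr μ h) := fun t t' htt' =>
  sInf_le_sInf fun s hs => le_trans hs (ENNReal.ofReal_le_ofReal htt')

lemma rearr_meas : Measurable (rearr μ h) := (rearr_anti μ h).measurable

lemma lt_rearr_iff (t : ℝ) (u : ℝ≥0∞) :
    u < rearr μ h t ↔ ENNReal.ofReal t < μ {x | u < ENNReal.ofReal |h x|} := by
  constructor
  · intro hlt
    by_contra hno
    push_neg at hno
    have hle : rearr μ h t ≤ u := sInf_le hno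
    exact absurd hlt (not_lt.mpr hle)
  · intro hd
    rcases eq_or_ne u ∞ with rfl | hu
    · have hempty : {x | (⊤:ℝ≥0∞) < ENNReal.ofReal |h x|} = (∅ : Set X) := by
        ext x; simp
      rw [hempty, measure_empty] at hd
      exact absurd hd (by simp)
    · set A : ℕ → Set X := fun n => {x | u + (n : ℝ≥0∞)⁻¹ < ENNReal.ofReal |h x|} with hA
      have hmono : Monotone A := by
        intro n m hnm x hx
        simp only [hA, Set.mem_setOf_eq] at hx ⊢
        exact lt_of_le_of_lt (add_le_add_right (ENNReal.inv_le_inv.mpr (by exact_mod_cast hnm : (n:ℝ≥0∞) ≤ m)) u) hx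
      have hUnion : ⋃ n, A n = {x | u < ENNReal.ofReal |h x|} := by
        ext x
        simp only [hA, Set.mem_iUnion, Set.mem_setOf_eq]
        constructor
        · rintro ⟨n, hx⟩
          exact lt_of_le_of_lt le_self_add hx
        · intro hx
          obtain ⟨s, hs1, hs2⟩ := exists_between hx
          obtain ⟨n, hn⟩ := ENNReal.exists_inv_nat_lt (tsub_pos_of_lt hs1).ne'
          refine ⟨n, ?_⟩
          have hlt2 : u + (n : ℝ≥0∞)⁻¹ < u + (s - u) := ENNReal.add_lt_add_left hu hn
          rw [add_tsub_cancel_of_le hs1.le] at hlt2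
          exact lt_trans hlt2 hs2
      have hsup : μ {x | u < ENNReal.ofReal |h x|} = ⨆ n, μ (A n) := by
        rw [← hUnion]
        exact hmono.directed_le.measure_iUnion
      rw [hsup] at hd
      obtain ⟨n, hn⟩ := lt_iSup_iff.mp hd
      have hus : u < u + (n : ℝ≥0∞)⁻¹ :=
        ENNReal.lt_add_right hu (ENNReal.inv_ne_zero.mpr (ENNReal.natCast_ne_top n))
      refine lt_of_lt_of_le hus (le_sInf fun s' hs' => ?_)
      by_contra hcon
      push_neg at hcon
      have hsub : A n ⊆ {x | s' < ENNReal.ofReal |h x|} := fun x hx => lt_trans hcon hx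
      exact absurd (le_trans (measure_mono hsub) hs') (not_le.mpr hn)

lemma vol_ofReal_lt (D : ℝ≥0∞) :
    volume ({t : ℝ | ENNReal.ofReal t < D} ∩ Ioi 0) = D := by
  rcases eq_or_ne D ∞ with rfl | hD
  · have : {t : ℝ | ENNReal.ofReal t < ∞} ∩ Ioi 0 = Ioi 0 := by
      ext t; simp [ENNReal.ofReal_lt_top]
    rw [this, Real.volume_Ioi]
  · have : {t : ℝ | ENNReal.ofReal t < D} ∩ Ioi 0 = Ioo 0 D.toReal := by
      ext t
      simp only [Set.mem_inter_iff, Set.mem_setOf_eq, Set.mem_Ioi, Set.mem_Ioo]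
      constructor
      · rintro ⟨h1, h2⟩
        exact ⟨h2, (ENNReal.ofReal_lt_iff_lt_toReal h2.le hD).mp h1⟩
      · rintro ⟨h1, h2⟩
        exact ⟨(ENNReal.ofReal_lt_iff_lt_toReal h1.le hD).mpr h2, h1⟩
    rw [this, Real.volume_Ioo, sub_zero, ENNReal.ofReal_toReal hD]

lemma vol_rearr_gt (u : ℝ≥0∞) :
    volume.restrict (Ioi (0:ℝ)) {t | u < rearr μ h t}
      = μ {x | u < ENNReal.ofReal |h x|} := by
  rw [Measure.restrict_apply (measurableSet_lt measurable_const (rearr_meas μ h))]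
  have : {t | u < rearr μ h t} ∩ Ioi 0
      = {t : ℝ | ENNReal.ofReal t < μ {x | u < ENNReal.ofReal |h x|}} ∩ Ioi 0 := by
    ext t
    simp only [Set.mem_inter_iff, Set.mem_setOf_eq, lt_rearr_iff]
  rw [this, vol_ofReal_lt]

lemma layercake' {α : Type*} [MeasurableSpace α] (ν : Measure α) [SFinite ν]
    {F : α → ℝ≥0∞} (hF : Measurable F) :
    ∫⁻ x, F x ∂ν = ∫⁻ s in Ioi (0:ℝ), ν {x | ENNReal.ofReal s < F x} := by
  set f : α → ℝ → ℝ≥0∞ := fun x s => if ENNReal.ofReal s < F x then 1 else 0 with hf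
  have hmeas : Measurable (Function.uncurry f) := by
    have : MeasurableSet {p : α × ℝ | ENNReal.ofReal p.2 < F p.1} :=
      measurableSet_lt (ENNReal.measurable_ofReal.comp measurable_snd) (hF.comp measurable_fst)
    exact Measurable.ite this measurable_const measurable_const
  have step1 : ∫⁻ x, F x ∂ν = ∫⁻ x, (∫⁻ s in Ioi (0:ℝ), f x s) ∂ν := by
    refine lintegral_congr fun x => ?_
    have : ∀ s : ℝ, f x s = Set.indicator {s : ℝ | ENNReal.ofReal s < F x} (fun _ => 1) s := by
      intro s
      simp [hf, Set.indicator_apply]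
    rw [lintegral_congr this, lintegral_indicator
      (measurableSet_lt ENNReal.measurable_ofReal measurable_const), setLIntegral_one,
      Measure.restrict_apply (measurableSet_lt ENNReal.measurable_ofReal measurable_const)]
    exact (vol_ofReal_lt (F x)).symm
  rw [step1, lintegral_lintegral_swap hmeas.aemeasurable]
  refine lintegral_congr fun s => ?_
  have : ∀ x : α, f x s = Set.indicator {x : α | ENNReal.ofReal s < F x} (fun _ => 1) x := by
    intro x
    simp [hf, Set.indicator_apply]
  rw [lintegral_congr this, lintegral_indicator (measurableSet_lt measurable_const hF),
    setLIntegral_one]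

lemma equi (hm : Measurable h) [SigmaFinite μ] (c : ℝ≥0∞) :
    ∫⁻ t in Ioi (0:ℝ), (rearr μ h t - c)
      = ∫⁻ x, (ENNReal.ofReal |h x| - c) ∂μ := by
  rw [layercake' (volume.restrict (Ioi (0:ℝ))) (F := fun t => rearr μ h t - c) ((rearr_meas μ h).sub measurable_const),
      layercake' μ (F := fun x => ENNReal.ofReal |h x| - c) (hm.abs.ennreal_ofReal.sub measurable_const)]
  refine lintegral_congr fun s => ?_
  simp only [lt_tsub_iff_right]
  exact vol_rearr_gt μ h (ENNReal.ofReal s + c)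

lemma hl_lower (hm : Measurable h) [SigmaFinite μ] {α : ℝ} (hα : 0 < α) :
    ENNReal.ofReal α * rearr μ h α + ∫⁻ x, (ENNReal.ofReal |h x| - rearr μ h α) ∂μ
      ≤ ∫⁻ t in Ioc (0:ℝ) α, rearr μ h t := by
  set c := rearr μ h α with hc
  rw [← equi μ h hm c]
  have hsplit : ∫⁻ t in Ioi (0:ℝ), (rearr μ h t - c)
      = (∫⁻ t in Ioc (0:ℝ) α, (rearr μ h t - c)) + ∫⁻ t in Ioi α, (rearr μ h t - c) := by
    rw [← lintegral_union measurableSet_Ioi (Set.Ioc_disjoint_Ioi le_rfl),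
      Set.Ioc_union_Ioi_eq_Ioi hα.le]
  have hzero : ∫⁻ t in Ioi α, (rearr μ h t - c) = 0 := by
    rw [setLIntegral_congr_fun measurableSet_Ioi
      (fun t (ht : α < t) => tsub_eq_zero_of_le (rearr_anti μ h ht.le)),
      lintegral_zero]
  rw [hsplit, hzero, add_zero]
  have heq : ∫⁻ t in Ioc (0:ℝ) α, rearr μ h t
      = ∫⁻ t in Ioc (0:ℝ) α, (c + (rearr μ h t - c)) := by
    refine setLIntegral_congr_fun measurableSet_Ioc (fun t ht => ?_)
    exact (add_tsub_cancel_of_le (rearr_anti μ h ht.2)).symm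
  rw [heq, lintegral_add_left measurable_const, setLIntegral_const, Real.volume_Ioc, sub_zero,
    mul_comm]

lemma hl_upper (hm : Measurable h) [SigmaFinite μ] {α : ℝ} (hα : 0 < α) (c : ℝ≥0∞) :
    ∫⁻ t in Ioc (0:ℝ) α, rearr μ h t
      ≤ ENNReal.ofReal α * c + ∫⁻ x, (ENNReal.ofReal |h x| - c) ∂μ := by
  rw [← equi μ h hm c]
  calc ∫⁻ t in Ioc (0:ℝ) α, rearr μ h t
      ≤ ∫⁻ t in Ioc (0:ℝ) α, (c + (rearr μ h t - c)) := lintegral_mono fun t => le_add_tsub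
    _ = ENNReal.ofReal α * c + ∫⁻ t in Ioc (0:ℝ) α, (rearr μ h t - c) := by
        rw [lintegral_add_left measurable_const, setLIntegral_const, Real.volume_Ioc, sub_zero,
          mul_comm]
    _ ≤ ENNReal.ofReal α * c + ∫⁻ t in Ioi (0:ℝ), (rearr μ h t - c) :=
        add_le_add_right (lintegral_mono_set Set.Ioc_subset_Ioi_self) _

end Aux

/-- Hardy–Littlewood submajorization: for measurable `f, g` on a σ-finite measure space and
every `α > 0`, `∫₀^α μ_t(f+g) dt ≤ ∫₀^α μ_t(f) dt + ∫₀^α μ_t(g) dt`. -/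
theorem stmt_17 {X : Type*} [MeasurableSpace X] (μ : Measure X) [SigmaFinite μ]
    (f g : X → ℝ) (hf : Measurable f) (hg : Measurable g) :
    ∀ α : ℝ, 0 < α →
      ∫⁻ t in Set.Ioc (0:ℝ) α, rearr μ (f + g) t ≤
        (∫⁻ t in Set.Ioc (0:ℝ) α, rearr μ f t) +
          ∫⁻ t in Set.Ioc (0:ℝ) α, rearr μ g t := by
  intro α hα
  set a := rearr μ f α with ha
  set b := rearr μ g α with hb
  have key : ∀ x, ENNReal.ofReal |(f + g) x| - (a + b)
      ≤ (ENNReal.ofReal |f x| - a) + (ENNReal.ofReal |g x| - b) := by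
    intro x
    have h1 : ENNReal.ofReal |(f + g) x| ≤ ENNReal.ofReal |f x| + ENNReal.ofReal |g x| := by
      rw [← ENNReal.ofReal_add (abs_nonneg _) (abs_nonneg _)]
      exact ENNReal.ofReal_le_ofReal (abs_add_le _ _)
    exact le_trans (tsub_le_tsub_right h1 _) add_tsub_add_le_tsub_add_tsub
  calc ∫⁻ t in Set.Ioc (0:ℝ) α, rearr μ (f + g) t
      ≤ ENNReal.ofReal α * (a + b) + ∫⁻ x, (ENNReal.ofReal |(f + g) x| - (a + b)) ∂μ :=
        hl_upper μ (f + g) (hf.add hg) hα (a + b)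
    _ ≤ ENNReal.ofReal α * (a + b)
          + ∫⁻ x, ((ENNReal.ofReal |f x| - a) + (ENNReal.ofReal |g x| - b)) ∂μ :=
        add_le_add_right (lintegral_mono key) _
    _ = (ENNReal.ofReal α * a + ∫⁻ x, (ENNReal.ofReal |f x| - a) ∂μ)
          + (ENNReal.ofReal α * b + ∫⁻ x, (ENNReal.ofReal |g x| - b) ∂μ) := by
        rw [lintegral_add_left (f := fun x => ENNReal.ofReal |f x| - a) (hf.abs.ennreal_ofReal.sub measurable_const), mul_add]
        ring
    _ ≤ (∫⁻ t in Set.Ioc (0:ℝ) α, rearr μ f t) + ∫⁻ t in Set.Ioc (0:ℝ) α, rearr μ g t :=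
        add_le_add (hl_lower μ f hf hα) (hl_lower μ g hg hα)
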